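/- arXiv:1702.08830 — 2 statements merged into one kernel-verified Lean document; each statement's English description precedes it below -/
import Mathlib

section
/- The transition operator t := (|a⟩⟨a| + |b⟩⟨b|)⊗1 − |a⟩⟨b|⊗U − |b⟩⟨a|⊗U† is positive semi-definite. -/
open Matrix Kronecker
open scoped ComplexOrder

private lemma kron_conjTranspose {l m p r : Type*} (A : Matrix l m ℂ) (B : Matrix p r ℂ) :
    (A ⊗ₖ B)ᴴ = Aᴴ ⊗ₖ Bᴴ := by
  ext ⟨i, j⟩ ⟨k, l⟩
  simp [conjTranspose_apply, mul_comm]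

private lemma vecMulVec_conjT {m n : Type*} (u : m → ℂ) (v : n → ℂ) :
    (Matrix.vecMulVec u v)ᴴ = Matrix.vecMulVec (star v) (star u) := by
  ext i j
  simp [conjTranspose_apply, vecMulVec_apply, mul_comm]

private lemma vecMulVec_mul_vecMulVec {l m n : Type*} [Fintype m]
    (u : l → ℂ) (v w : m → ℂ) (x : n → ℂ) :
    Matrix.vecMulVec u v * Matrix.vecMulVec w x = (v ⬝ᵥ w) • Matrix.vecMulVec u x := by
  ext i j
  simp only [mul_apply, vecMulVec_apply, Matrix.smul_apply, dotProduct, smul_eq_mul,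
    Finset.sum_mul, Finset.mul_sum]
  refine Finset.sum_congr rfl fun k _ => by ring

/-- The transition operator
`t := (|a⟩⟨a| + |b⟩⟨b|)⊗1 − |a⟩⟨b|⊗U − |b⟩⟨a|⊗U†`
(for orthonormal `|a⟩,|b⟩` and unitary `U`) is positive semi-definite. -/
theorem transition_term_posSemidef
    {m q : ℕ}
    (a b : Fin m → ℂ)
    (ha : star a ⬝ᵥ a = 1) (hb : star b ⬝ᵥ b = 1) (hab : star a ⬝ᵥ b = 0)
    (U : Matrix (Fin q) (Fin q) ℂ) (hU : U ∈ Matrix.unitaryGroup (Fin q) ℂ) :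
    Matrix.PosSemidef
      ((Matrix.vecMulVec a (star a) + Matrix.vecMulVec b (star b)) ⊗ₖ
          (1 : Matrix (Fin q) (Fin q) ℂ)
        - (Matrix.vecMulVec a (star b)) ⊗ₖ U
        - (Matrix.vecMulVec b (star a)) ⊗ₖ Uᴴ) := by
  have hba : star b ⬝ᵥ a = 0 := by
    have := congrArg star hab
    rwa [star_dotProduct, star_star, star_zero] at this
  have hUU : Uᴴ * U = 1 := by
    have := hU.1
    rwa [Matrix.star_eq_conjTranspose] at this
  set N : Matrix (Fin m × Fin q) (Fin m × Fin q) ℂ :=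
    Matrix.vecMulVec a (star a) ⊗ₖ (1 : Matrix (Fin q) (Fin q) ℂ)
      - Matrix.vecMulVec a (star b) ⊗ₖ U with hN
  have key : Nᴴ * N =
      (Matrix.vecMulVec a (star a) + Matrix.vecMulVec b (star b)) ⊗ₖ
          (1 : Matrix (Fin q) (Fin q) ℂ)
        - (Matrix.vecMulVec a (star b)) ⊗ₖ U
        - (Matrix.vecMulVec b (star a)) ⊗ₖ Uᴴ := by
    rw [hN, conjTranspose_sub, kron_conjTranspose, kron_conjTranspose,
      vecMulVec_conjT, vecMulVec_conjT, star_star, star_star, conjTranspose_one,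
      sub_mul, mul_sub, mul_sub, ← mul_kronecker_mul, ← mul_kronecker_mul,
      ← mul_kronecker_mul, ← mul_kronecker_mul, _root_.vecMulVec_mul_vecMulVec,
      _root_.vecMulVec_mul_vecMulVec, _root_.vecMulVec_mul_vecMulVec, _root_.vecMulVec_mul_vecMulVec,
      ha, hUU]
    simp only [one_smul, one_mul, mul_one, Matrix.add_kronecker]
    abel
  rw [← key]
  exact Matrix.posSemidef_conjTranspose_mul_self N
end

section
/- The history state Hamiltonian H_prop := Σ_{t=0}^{T−1} Σ_j (|t⟩⊗|j⟩ − |t+1⟩⊗U_t|j⟩)(h.c.) on C^{T+1}⊗(C^d)^{⊗n} has kernel exactly the span of states of the form |Ψ⟩ = Σ_{t=0}^{T} |t⟩⊗U_t···U_1|φ⟩ for |φ⟩ ∈ (C^d)^{⊗n}. -/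
open Matrix

variable {T n d : ℕ}

/-- The partial product `U_k ⋯ U_1` of the circuit unitaries (`U_0` interpreted as `1`). -/
noncomputable def prodU (U : Fin T → Matrix (Fin n → Fin d) (Fin n → Fin d) ℂ) :
    ℕ → Matrix (Fin n → Fin d) (Fin n → Fin d) ℂ
  | 0 => 1
  | k + 1 => (if h : k < T then U ⟨k, h⟩ else 1) * prodU U k

/-- The vector `|t⟩⊗|j⟩ − |t+1⟩⊗U_{t+1}|j⟩` on `ℂ^{T+1} ⊗ (ℂ^d)^{⊗n}`,
with `{|j⟩}` the standard (orthonormal) basis of `(ℂ^d)^{⊗n}`. -/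
noncomputable def histVec (U : Fin T → Matrix (Fin n → Fin d) (Fin n → Fin d) ℂ)
    (t : Fin T) (j : Fin n → Fin d) : Fin (T + 1) × (Fin n → Fin d) → ℂ :=
  fun p =>
    (if p.1 = t.castSucc then (if p.2 = j then 1 else 0) else 0) -
      (if p.1 = t.succ then (U t).mulVec (fun y => if y = j then 1 else 0) p.2 else 0)

/-- The history state Hamiltonian
`H_prop := Σ_{t=0}^{T−1} Σ_j (|t⟩⊗|j⟩ − |t+1⟩⊗U_{t+1}|j⟩)(h.c.)`. -/
noncomputable def Hprop (U : Fin T → Matrix (Fin n → Fin d) (Fin n → Fin d) ℂ) :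
    Matrix (Fin (T + 1) × (Fin n → Fin d)) (Fin (T + 1) × (Fin n → Fin d)) ℂ :=
  ∑ t : Fin T, ∑ j : Fin n → Fin d,
    Matrix.vecMulVec (histVec U t j) (star (histVec U t j))

/-- The history state `|Ψ⟩ = Σ_{t=0}^{T} |t⟩ ⊗ U_t⋯U_1|φ⟩` for initial state `|φ⟩`. -/
noncomputable def historyState (U : Fin T → Matrix (Fin n → Fin d) (Fin n → Fin d) ℂ)
    (φ : (Fin n → Fin d) → ℂ) : Fin (T + 1) × (Fin n → Fin d) → ℂ :=
  fun p => (prodU U (p.1 : ℕ)).mulVec φ p.2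


lemma dot_histVec (U : Fin T → Matrix (Fin n → Fin d) (Fin n → Fin d) ℂ)
    (t : Fin T) (j : Fin n → Fin d) (v : Fin (T + 1) × (Fin n → Fin d) → ℂ) :
    star (histVec U t j) ⬝ᵥ v =
      v (t.castSucc, j) - ∑ x, (starRingEnd ℂ) (U t x j) * v (t.succ, x) := by
  have hmv : ∀ x, (U t).mulVec (fun y => if y = j then 1 else 0) x = U t x j := by
    intro x
    simp [Matrix.mulVec, dotProduct, mul_ite, mul_one, mul_zero, Finset.sum_ite_eq']
  simp only [dotProduct, histVec, Pi.star_apply, hmv]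
  rw [Fintype.sum_prod_type]
  simp [star_sub, sub_mul, Finset.sum_sub_distrib, apply_ite (starRingEnd ℂ),
    ite_mul, zero_mul, one_mul, Finset.sum_ite_eq, Finset.sum_ite_eq',
    (Fin.castSucc_lt_succ : t.castSucc < t.succ).ne]

lemma vecMulVec_star_mulVec {ι : Type*} [Fintype ι] (a w : ι → ℂ) :
    (Matrix.vecMulVec a (star a)).mulVec w = fun i => a i * (star a ⬝ᵥ w) := by
  funext i
  simp [Matrix.vecMulVec, Matrix.mulVec, dotProduct, Finset.mul_sum, mul_assoc]


lemma conjT_mulVec_apply {m : Type*} [Fintype m] (A : Matrix m m ℂ) (w : m → ℂ) (j : m) :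
    (Aᴴ *ᵥ w) j = ∑ x, (starRingEnd ℂ) (A x j) * w x := by
  simp [Matrix.mulVec, dotProduct, Matrix.conjTranspose_apply]

lemma sum_mulVec' {ι m : Type*} [Fintype m] (s : Finset ι) (A : ι → Matrix m m ℂ)
    (w : m → ℂ) : (∑ t ∈ s, A t) *ᵥ w = ∑ t ∈ s, A t *ᵥ w := by
  funext i
  simp only [Matrix.mulVec, dotProduct, Matrix.sum_apply, Finset.sum_mul, Finset.sum_apply]
  exact Finset.sum_comm

lemma prodU_succ (U : Fin T → Matrix (Fin n → Fin d) (Fin n → Fin d) ℂ) (t : Fin T) :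
    prodU U ((t : ℕ) + 1) = U t * prodU U (t : ℕ) := by
  rw [prodU, dif_pos t.isLt]

lemma dot_histVec_historyState (U : Fin T → Matrix (Fin n → Fin d) (Fin n → Fin d) ℂ)
    (hU : ∀ t, U t ∈ Matrix.unitaryGroup (Fin n → Fin d) ℂ)
    (t : Fin T) (j : Fin n → Fin d) (φ : (Fin n → Fin d) → ℂ) :
    star (histVec U t j) ⬝ᵥ historyState U φ = 0 := by
  rw [dot_histVec]
  simp only [historyState, Fin.coe_castSucc, Fin.val_succ]
  rw [← conjT_mulVec_apply, prodU_succ, Matrix.mulVec_mulVec, ← mul_assoc,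
    ← Matrix.star_eq_conjTranspose, (Matrix.mem_unitaryGroup_iff'.mp (hU t)), one_mul,
    sub_self]

lemma Hprop_mulVec_historyState (U : Fin T → Matrix (Fin n → Fin d) (Fin n → Fin d) ℂ)
    (hU : ∀ t, U t ∈ Matrix.unitaryGroup (Fin n → Fin d) ℂ)
    (φ : (Fin n → Fin d) → ℂ) :
    (Hprop U).mulVec (historyState U φ) = 0 := by
  unfold Hprop
  rw [sum_mulVec']
  refine Finset.sum_eq_zero fun t _ => ?_
  rw [sum_mulVec']
  refine Finset.sum_eq_zero fun j _ => ?_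
  rw [vecMulVec_star_mulVec, dot_histVec_historyState U hU]
  funext i; simp

lemma dot_sum {ι m : Type*} [Fintype m] (s : Finset ι) (f : ι → m → ℂ) (v : m → ℂ) :
    v ⬝ᵥ (∑ i ∈ s, f i) = ∑ i ∈ s, v ⬝ᵥ f i := by
  simp only [dotProduct, Finset.sum_apply, Finset.mul_sum]
  exact Finset.sum_comm

lemma star_dot_comm {m : Type*} [Fintype m] (a v : m → ℂ) :
    star v ⬝ᵥ a = (starRingEnd ℂ) (star a ⬝ᵥ v) := by
  simp only [dotProduct, Pi.star_apply, map_sum, _root_.map_mul, RCLike.star_def,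
    Complex.conj_conj]
  exact Finset.sum_congr rfl fun p _ => mul_comm _ _

/-- The kernel of the history state Hamiltonian `H_prop` on `ℂ^{T+1} ⊗ (ℂ^d)^{⊗n}` is
exactly the span of the history states `Σ_{t=0}^T |t⟩ ⊗ U_t⋯U_1|φ⟩`. -/
theorem kernel_Hprop (hT : 1 ≤ T)
    (U : Fin T → Matrix (Fin n → Fin d) (Fin n → Fin d) ℂ)
    (hU : ∀ t, U t ∈ Matrix.unitaryGroup (Fin n → Fin d) ℂ)
    (v : Fin (T + 1) × (Fin n → Fin d) → ℂ) :
    (Hprop U).mulVec v = 0 ↔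
      v ∈ Submodule.span ℂ (Set.range (historyState U)) := by
  constructor
  · intro hv
    have h0 : star v ⬝ᵥ (Hprop U).mulVec v = 0 := by rw [hv]; simp
    have hexp : star v ⬝ᵥ (Hprop U).mulVec v =
        ∑ t : Fin T, ∑ j : Fin n → Fin d,
          ((Complex.normSq (star (histVec U t j) ⬝ᵥ v) : ℂ)) := by
      unfold Hprop
      rw [sum_mulVec', dot_sum]
      refine Finset.sum_congr rfl fun t _ => ?_
      rw [sum_mulVec', dot_sum]
      refine Finset.sum_congr rfl fun j _ => ?_
      rw [vecMulVec_star_mulVec]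
      set c := star (histVec U t j) ⬝ᵥ v with hc
      have h1 : star v ⬝ᵥ (fun i => histVec U t j i * c) =
          (star v ⬝ᵥ histVec U t j) * c := by
        simp only [dotProduct, Pi.star_apply, Finset.sum_mul, mul_assoc]
      rw [h1, star_dot_comm, ← hc, mul_comm, Complex.mul_conj]
    have hall : ∀ t j, star (histVec U t j) ⬝ᵥ v = 0 := by
      have hr : ∑ t : Fin T, ∑ j : Fin n → Fin d,
          Complex.normSq (star (histVec U t j) ⬝ᵥ v) = 0 := by
        have h2 : (∑ t : Fin T, ∑ j : Fin n → Fin d,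
            ((Complex.normSq (star (histVec U t j) ⬝ᵥ v) : ℂ))) = 0 := by
          rw [← hexp]; exact h0
        exact_mod_cast h2
      intro t j
      have h1 := (Finset.sum_eq_zero_iff_of_nonneg
        (fun t _ => Finset.sum_nonneg fun j _ => Complex.normSq_nonneg _)).mp hr t
        (Finset.mem_univ t)
      have h2 := (Finset.sum_eq_zero_iff_of_nonneg
        (fun j _ => Complex.normSq_nonneg _)).mp h1 j (Finset.mem_univ j)
      exact Complex.normSq_eq_zero.mp h2
    have step : ∀ t : Fin T,
        (fun x => v (t.succ, x)) = (U t) *ᵥ (fun x => v (t.castSucc, x)) := by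
      intro t
      have hvc : (fun x => v (t.castSucc, x)) = (U t)ᴴ *ᵥ (fun x => v (t.succ, x)) := by
        funext j
        have h := hall t j
        rw [dot_histVec, sub_eq_zero] at h
        rw [conjT_mulVec_apply]
        exact h
      rw [hvc, Matrix.mulVec_mulVec, ← Matrix.star_eq_conjTranspose,
        (Matrix.mem_unitaryGroup_iff.mp (hU t)), Matrix.one_mulVec]
    have claim : ∀ k (hk : k < T + 1) x,
        v (⟨k, hk⟩, x) = (prodU U k *ᵥ fun y => v (0, y)) x := by
      intro k
      induction k with
      | zero =>
        intro hk x
        have h0' : (⟨0, hk⟩ : Fin (T + 1)) = 0 := rfl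
        rw [h0']
        simp [prodU, Matrix.one_mulVec]
      | succ k ih =>
        intro hk x
        have hkT : k < T := Nat.lt_of_succ_lt_succ hk
        set t : Fin T := ⟨k, hkT⟩ with ht
        have hsucc : (⟨k + 1, hk⟩ : Fin (T + 1)) = t.succ := rfl
        have hcast : t.castSucc = ⟨k, Nat.lt_succ_of_lt hkT⟩ := rfl
        rw [hsucc]
        have := congrFun (step t) x
        rw [this]
        have hih : (fun y => v (t.castSucc, y)) = prodU U k *ᵥ fun y => v (0, y) := by
          funext y
          rw [hcast]
          exact ih (Nat.lt_succ_of_lt hkT) y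
        rw [hih, Matrix.mulVec_mulVec]
        have : prodU U (k + 1) = U t * prodU U k := by
          rw [prodU, dif_pos hkT]
        rw [this]
    have hveq : v = historyState U (fun y => v (0, y)) := by
      funext p
      obtain ⟨a, x⟩ := p
      have : a = ⟨(a : ℕ), a.isLt⟩ := rfl
      rw [this]
      exact claim a.1 a.isLt x
    rw [hveq]
    exact Submodule.subset_span ⟨_, rfl⟩
  · intro hv
    have hle : Submodule.span ℂ (Set.range (historyState U)) ≤
        LinearMap.ker (Matrix.mulVecLin (Hprop U)) := by
      rw [Submodule.span_le]
      rintro w ⟨φ, rfl⟩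
      simp only [SetLike.mem_coe, LinearMap.mem_ker, Matrix.mulVecLin_apply]
      exact Hprop_mulVec_historyState U hU φ
    simpa using hle hv
end
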